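/- (Example: rotation gate.) Let θ ∈ ℝ with cos²θ ≠ sin²θ, and write c = cos θ, s = sin θ. The coherence generating power of the rotation U_θ = [[cos θ, sin θ], [−sin θ, cos θ]] satisfies ∫_0^1 [H(c²λ + s²(1−λ), s²λ + c²(1−λ)) − H(λ, 1−λ)] dλ = (sin⁴θ · ln(sin²θ) − cos⁴θ · ln(cos²θ)) / (cos²θ − sin²θ), where H(a, b) = −a ln a − b ln b. -/

import Mathlib

open MeasureTheory Real

/-- Shannon entropy of a vector, with the convention `0 * log 0 = 0`. -/
noncomputable def shannonEntropy {N : ℕ} (p : Fin N → ℝ) : ℝ :=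
  ∑ i, Real.negMulLog (p i)

/-- Subentropy of a vector (well defined when the entries are pairwise distinct). -/
noncomputable def subentropy {N : ℕ} (p : Fin N → ℝ) : ℝ :=
  -∑ i, p i ^ N * Real.log (p i) / ∏ j ∈ Finset.univ.erase i, (p i - p j)

/-- A matrix is bi-stochastic if it has nonnegative entries and all row and column sums are 1. -/
def IsBistochastic {N : ℕ} (B : Matrix (Fin N) (Fin N) ℝ) : Prop :=
  (∀ i j, 0 ≤ B i j) ∧ (∀ i, ∑ j, B i j = 1) ∧ (∀ j, ∑ i, B i j = 1)

/-- Parametrization of the probability simplex `Δ_{N-1}` by the solid simplex in `ℝ^{N-1}`: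
`x ↦ (x_1, …, x_{N-1}, 1 - ∑_{j<N} x_j)`. -/
noncomputable def simplexMap (N : ℕ) (x : Fin (N - 1) → ℝ) : Fin N → ℝ :=
  fun i => if h : (i : ℕ) < N - 1 then x ⟨i, h⟩ else 1 - ∑ j, x j

/-- The solid simplex `T = {x ∈ ℝ^{N-1} : x_j ≥ 0, ∑_j x_j ≤ 1}`. -/
def solidSimplex (N : ℕ) : Set (Fin (N - 1) → ℝ) :=
  {x | (∀ j, 0 ≤ x j) ∧ ∑ j, x j ≤ 1}

/-- Integral of a function on the probability simplex with respect to the uniform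
probability measure `μ_N`, realized as `(N-1)!` times the Lebesgue integral over the
solid simplex of the parametrized integrand. -/
noncomputable def simplexIntegral (N : ℕ) (f : (Fin N → ℝ) → ℝ) : ℝ :=
  ((N - 1).factorial : ℝ) * ∫ x in solidSimplex N, f (simplexMap N x)

/-- The `N`-th harmonic number `H_N = ∑_{j=1}^N 1/j`. -/
noncomputable def harmonicNum (N : ℕ) : ℝ := ∑ j ∈ Finset.range N, (1 : ℝ) / (j + 1)


lemma hasDerivAt_nmlAnti (t : ℝ) :
    HasDerivAt (fun t : ℝ => t ^ 2 / 4 - t ^ 2 * Real.log t / 2) (Real.negMulLog t) t := by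
  rcases eq_or_ne t 0 with rfl | ht
  · rw [hasDerivAt_iff_tendsto_slope]
    have hc : Continuous fun h : ℝ => h / 4 + Real.negMulLog h / 2 :=
      (continuous_id.div_const 4).add (Real.continuous_negMulLog.div_const 2)
    have key : Filter.Tendsto (fun h : ℝ => h / 4 + Real.negMulLog h / 2)
        (nhdsWithin 0 {(0:ℝ)}ᶜ) (nhds (Real.negMulLog 0)) := by
      have h2 : Filter.Tendsto (fun h : ℝ => h / 4 + Real.negMulLog h / 2)
          (nhdsWithin 0 {(0:ℝ)}ᶜ) (nhds (0 / 4 + Real.negMulLog 0 / 2)) :=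
        (hc.tendsto 0).mono_left nhdsWithin_le_nhds
      simpa [Real.negMulLog_zero] using h2
    refine key.congr' ?_
    filter_upwards [self_mem_nhdsWithin] with x hx
    have hx0 : x ≠ 0 := hx
    simp only [slope_def_field, Real.negMulLog, Real.log_zero]
    field_simp
    ring
  · have h1 : HasDerivAt (fun t : ℝ => t ^ 2 / 4 - t ^ 2 * Real.log t / 2)
        (((2:ℕ) * t ^ 1) / 4 - (((2:ℕ) * t ^ 1) * Real.log t + t ^ 2 * t⁻¹) / 2) t :=
      ((hasDerivAt_pow 2 t).div_const 4).sub
        (((hasDerivAt_pow 2 t).mul (Real.hasDerivAt_log ht)).div_const 2)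
    convert h1 using 1
    rw [Real.negMulLog]
    field_simp
    ring

lemma integral_negMulLog_line (a b : ℝ) (hab : b ≠ a) :
    ∫ x in (0:ℝ)..1, Real.negMulLog (a + (b - a) * x)
      = ((b ^ 2 / 4 - b ^ 2 * Real.log b / 2) - (a ^ 2 / 4 - a ^ 2 * Real.log a / 2)) / (b - a) := by
  have hba : b - a ≠ 0 := sub_ne_zero.mpr hab
  have key : ∀ x ∈ Set.uIcc (0:ℝ) 1,
      HasDerivAt (fun x : ℝ => ((a + (b - a) * x) ^ 2 / 4
          - (a + (b - a) * x) ^ 2 * Real.log (a + (b - a) * x) / 2) / (b - a))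
        (Real.negMulLog (a + (b - a) * x)) x := by
    intro x _
    have h1 : HasDerivAt (fun x : ℝ => a + (b - a) * x) (b - a) x := by
      simpa using ((hasDerivAt_id x).const_mul (b - a)).const_add a
    have h2 := ((hasDerivAt_nmlAnti (a + (b - a) * x)).comp x h1).div_const (b - a)
    convert h2 using 1
    · rfl
    · rfl
    · rfl
    · exact (mul_div_cancel_right₀ _ hba).symm
  rw [intervalIntegral.integral_eq_sub_of_hasDerivAt key
    ((Real.continuous_negMulLog.comp (by continuity)).intervalIntegrable 0 1)]
  rw [show a + (b - a) * 1 = b by ring, show a + (b - a) * 0 = a by ring]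
  ring

lemma int_nml_x : ∫ x in (0:ℝ)..1, Real.negMulLog x = 1 / 4 := by
  have := integral_negMulLog_line 0 1 one_ne_zero
  simp only [Real.log_one, Real.log_zero] at this
  rw [show (fun x : ℝ => Real.negMulLog x) = fun x : ℝ => Real.negMulLog (0 + (1 - 0) * x) by
    funext x; norm_num] at *
  rw [this]; norm_num

lemma int_nml_1x : ∫ x in (0:ℝ)..1, Real.negMulLog (1 - x) = 1 / 4 := by
  have := integral_negMulLog_line 1 0 zero_ne_one
  simp only [Real.log_one, Real.log_zero] at this
  rw [show (fun x : ℝ => Real.negMulLog (1 - x)) = fun x : ℝ => Real.negMulLog (1 + (0 - 1) * x) by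
    funext x; ring_nf] at *
  rw [this]; norm_num

lemma alg (a b L M : ℝ) (hab : a + b = 1) (hne : b - a ≠ 0) :
    ((b ^ 2 / 4 - b ^ 2 * M / 2) - (a ^ 2 / 4 - a ^ 2 * L / 2)) / (b - a)
      + ((a ^ 2 / 4 - a ^ 2 * L / 2) - (b ^ 2 / 4 - b ^ 2 * M / 2)) / (a - b)
      - (1 / 4 + 1 / 4) = (a ^ 2 * L - b ^ 2 * M) / (b - a) := by
  have hne' : a - b ≠ 0 := fun hh => hne (by linarith [sub_eq_zero.mp hh])
  field_simp
  ring_nf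
  linear_combination (-4*(a-b)^2) * hab

/-- Example: rotation gate: the coherence generating power of the rotation
`U_θ` equals `(sin⁴θ ln sin²θ - cos⁴θ ln cos²θ)/(cos²θ - sin²θ)`. -/
theorem cgp_rotation (θ : ℝ) (h : Real.cos θ ^ 2 ≠ Real.sin θ ^ 2) :
    (∫ x in (0:ℝ)..1,
        ((Real.negMulLog (Real.cos θ ^ 2 * x + Real.sin θ ^ 2 * (1 - x)) +
          Real.negMulLog (Real.sin θ ^ 2 * x + Real.cos θ ^ 2 * (1 - x))) -
         (Real.negMulLog x + Real.negMulLog (1 - x)))) =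
      (Real.sin θ ^ 4 * Real.log (Real.sin θ ^ 2) -
        Real.cos θ ^ 4 * Real.log (Real.cos θ ^ 2)) /
        (Real.cos θ ^ 2 - Real.sin θ ^ 2) := by
  have hpyth : Real.sin θ ^ 2 + Real.cos θ ^ 2 = 1 := Real.sin_sq_add_cos_sq θ
  set c2 := Real.cos θ ^ 2 with hc2
  set s2 := Real.sin θ ^ 2 with hs2
  have hne : c2 ≠ s2 := h
  have hcs : c2 - s2 ≠ 0 := sub_ne_zero.mpr hne
  have hsc : s2 - c2 ≠ 0 := sub_ne_zero.mpr (Ne.symm hne)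
  have hcont : ∀ p q : ℝ, Continuous fun x : ℝ => Real.negMulLog (p + q * x) := fun p q =>
    Real.continuous_negMulLog.comp (by continuity)
  have i1 : IntervalIntegrable (fun x : ℝ => Real.negMulLog (s2 + (c2 - s2) * x)) volume 0 1 :=
    (hcont s2 (c2 - s2)).intervalIntegrable 0 1
  have i2 : IntervalIntegrable (fun x : ℝ => Real.negMulLog (c2 + (s2 - c2) * x)) volume 0 1 :=
    (hcont c2 (s2 - c2)).intervalIntegrable 0 1
  have i3 : IntervalIntegrable (fun x : ℝ => Real.negMulLog x) volume 0 1 :=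
    Real.continuous_negMulLog.intervalIntegrable 0 1
  have i4 : IntervalIntegrable (fun x : ℝ => Real.negMulLog (1 - x)) volume 0 1 :=
    (Real.continuous_negMulLog.comp (by continuity)).intervalIntegrable 0 1
  have split : (∫ x in (0:ℝ)..1,
        ((Real.negMulLog (c2 * x + s2 * (1 - x)) + Real.negMulLog (s2 * x + c2 * (1 - x))) -
         (Real.negMulLog x + Real.negMulLog (1 - x))))
      = ((∫ x in (0:ℝ)..1, Real.negMulLog (s2 + (c2 - s2) * x))
          + (∫ x in (0:ℝ)..1, Real.negMulLog (c2 + (s2 - c2) * x)))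
        - ((∫ x in (0:ℝ)..1, Real.negMulLog x) + (∫ x in (0:ℝ)..1, Real.negMulLog (1 - x))) := by
    rw [← intervalIntegral.integral_add i1 i2, ← intervalIntegral.integral_add i3 i4,
        ← intervalIntegral.integral_sub (i1.add i2) (i3.add i4)]
    apply intervalIntegral.integral_congr
    intro x _
    simp only
    rw [show c2 * x + s2 * (1 - x) = s2 + (c2 - s2) * x by ring,
        show s2 * x + c2 * (1 - x) = c2 + (s2 - c2) * x by ring]
  rw [split, integral_negMulLog_line s2 c2 hne, integral_negMulLog_line c2 s2 (Ne.symm hne),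
      int_nml_x, int_nml_1x,
      show Real.sin θ ^ 4 = s2 ^ 2 by rw [hs2]; ring,
      show Real.cos θ ^ 4 = c2 ^ 2 by rw [hc2]; ring]
  exact alg s2 c2 (Real.log s2) (Real.log c2) hpyth hcs
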